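/- The topological sum X = ℝ ⊕ (ℝ∖ℚ) (the disjoint union of ℝ and the irrationals, each with its usual topology) satisfies property (θ), but does not satisfy S_fin(O,O). -/

import Mathlib

open Set Filter Topology

attribute [local instance] Classical.propDecidable

/-- Property (θ): there are an injectively enumerated open γ-cover `U` of `X` and a countable
`D ⊆ X` such that every clopen refinement of `U` which is a γ-cover of some `Y ⊇ D`
forces `|Y| < |X|`. -/
def PropTheta (X : Type u) [TopologicalSpace X] : Prop :=
  ∃ U : ℕ → Set X, Function.Injective U ∧ (∀ n, IsOpen (U n)) ∧
    (∀ x : X, ∀ᶠ n in atTop, x ∈ U n) ∧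
    ∃ D : Set X, D.Countable ∧
      ∀ V : ℕ → Set X, (∀ n, IsClopen (V n)) → (∀ n, V n ⊆ U n) →
        ∀ Y : Set X, D ⊆ Y → (∀ y ∈ Y, ∀ᶠ n in atTop, y ∈ V n) →
          Cardinal.mk ↥Y < Cardinal.mk X

/-- The Menger property S_fin(O,O). -/
def Menger (X : Type u) [TopologicalSpace X] : Prop :=
  ∀ U : ℕ → Set (Set X), (∀ k, (∀ V ∈ U k, IsOpen V) ∧ ⋃₀ U k = Set.univ) →
    ∃ F : ℕ → Set (Set X), (∀ k, F k ⊆ U k ∧ (F k).Finite) ∧ ⋃₀ (⋃ k, F k) = Set.univ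

noncomputable section
namespace ThetaCells

/-- affine embedding of `[0,1]` onto `[1/(n+2), 1/(n+1)]`. -/
def emb (n : ℕ) (t : ℝ) : ℝ := ((n:ℝ)+2)⁻¹ + t * (((n:ℝ)+1)⁻¹ - ((n:ℝ)+2)⁻¹)

lemma slope_pos (n : ℕ) : (0:ℝ) < ((n:ℝ)+1)⁻¹ - ((n:ℝ)+2)⁻¹ := by
  have h1 : (0:ℝ) < (n:ℝ)+1 := by positivity
  have h2 : ((n:ℝ)+1) < (n:ℝ)+2 := by linarith
  have := one_div_lt_one_div_of_lt h1 h2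
  simp only [one_div] at this
  linarith

lemma emb_strictMono (n : ℕ) : StrictMono (emb n) := fun a b h => by
  unfold emb
  have := slope_pos n
  nlinarith

lemma emb_mono (n : ℕ) : Monotone (emb n) := (emb_strictMono n).monotone

lemma emb_nonneg (n : ℕ) {t : ℝ} (ht : 0 ≤ t) : 0 ≤ emb n t := by
  unfold emb
  have := slope_pos n
  have : (0:ℝ) < ((n:ℝ)+2)⁻¹ := by positivity
  nlinarith [slope_pos n]

lemma emb_le_one (n : ℕ) {t : ℝ} (ht : t ≤ 1) : emb n t ≤ 1 := by
  unfold emb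
  have hs := slope_pos n
  have h0 : (0:ℝ) < (n:ℝ)+1 := by positivity
  have h1 : ((n:ℝ)+1)⁻¹ * ((n:ℝ)+1) = 1 := inv_mul_cancel₀ (ne_of_gt h0)
  have h2 : (0:ℝ) < ((n:ℝ)+1)⁻¹ := by positivity
  have hn : (0:ℝ) ≤ (n:ℝ) := Nat.cast_nonneg n
  have h3 : ((n:ℝ)+1)⁻¹ ≤ 1 := by nlinarith [mul_nonneg h2.le hn]
  nlinarith

def lo : List ℕ → ℝ
  | [] => 0
  | n :: l => emb n (lo l)

def hi : List ℕ → ℝ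
  | [] => 1
  | n :: l => emb n (hi l)

lemma lo_lt_hi : ∀ l : List ℕ, lo l < hi l
  | [] => by norm_num [lo, hi]
  | n :: l => emb_strictMono n (lo_lt_hi l)

lemma lo_nonneg : ∀ l : List ℕ, 0 ≤ lo l
  | [] => le_refl 0
  | n :: l => emb_nonneg n (lo_nonneg l)

lemma hi_le_one : ∀ l : List ℕ, hi l ≤ 1
  | [] => le_refl 1
  | n :: l => emb_le_one n (hi_le_one l)

lemma lo_append : ∀ (l : List ℕ) (m : ℕ),
    lo (l ++ [m]) = lo l + ((m:ℝ)+2)⁻¹ * (hi l - lo l)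
  | [], m => by simp [lo, hi, emb]
  | n :: l, m => by
    rw [List.cons_append]
    show emb n (lo (l ++ [m])) = _
    rw [lo_append l m]
    simp only [lo, hi, emb]
    ring

lemma hi_append : ∀ (l : List ℕ) (m : ℕ),
    hi (l ++ [m]) = lo l + ((m:ℝ)+1)⁻¹ * (hi l - lo l)
  | [], m => by
    simp only [List.nil_append, lo, hi, emb]
    have h2 : ((m:ℝ)+2) ≠ 0 := by positivity
    field_simp
    ring
  | n :: l, m => by
    rw [List.cons_append]
    show emb n (hi (l ++ [m])) = _
    rw [hi_append l m]
    simp only [lo, hi, emb]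
    ring

/-- `lo` and `hi` are rational numbers. -/
lemma exists_rat_lo_hi : ∀ l : List ℕ, (∃ q : ℚ, (q:ℝ) = lo l) ∧ ∃ q : ℚ, (q:ℝ) = hi l
  | [] => ⟨⟨0, by norm_num [lo]⟩, ⟨1, by norm_num [hi]⟩⟩
  | n :: l => by
    obtain ⟨⟨a, ha⟩, ⟨b, hb⟩⟩ := exists_rat_lo_hi l
    constructor
    · exact ⟨((n:ℚ)+2)⁻¹ + a * (((n:ℚ)+1)⁻¹ - ((n:ℚ)+2)⁻¹), by push_cast [lo, emb, ha]; ring⟩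
    · exact ⟨((n:ℚ)+2)⁻¹ + b * (((n:ℚ)+1)⁻¹ - ((n:ℚ)+2)⁻¹), by push_cast [hi, emb, hb]; ring⟩

/-- membership in the open cell -/
def cellmem (x : ℝ) (l : List ℕ) : Prop := lo l < x ∧ x < hi l

lemma step_exists {x : ℝ} (hx : Irrational x) {l : List ℕ} (h : cellmem x l) :
    ∃ m : ℕ, cellmem x (l ++ [m]) := by
  obtain ⟨⟨a, ha⟩, ⟨b, hb⟩⟩ := exists_rat_lo_hi l
  set d : ℝ := hi l - lo l with hd
  have hdpos : 0 < d := sub_pos.mpr (lo_lt_hi l)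
  set t : ℝ := (x - lo l) / d with ht
  have ht0 : 0 < t := div_pos (sub_pos.mpr h.1) hdpos
  have ht1 : t < 1 := (div_lt_one hdpos).mpr (by have := h.2; linarith)
  have hxt : x = lo l + t * d := by rw [ht, div_mul_cancel₀ _ hdpos.ne']; ring
  -- t is irrational relative to the rational endpoints: t ≠ 1/(m+1)
  have hirr : ∀ q : ℚ, t ≠ (q:ℝ) := by
    intro q hq
    apply hx.ne_rat (a + q * (b - a))
    push_cast
    rw [hxt, hq, hd, ← ha, ← hb]
  have hu1 : 1 < 1 / t := by
    rw [lt_div_iff₀ ht0]; linarith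
  set j : ℕ := (⌊1/t⌋).toNat with hj
  have hj1 : 1 ≤ j := by
    have : (1:ℤ) ≤ ⌊1/t⌋ := by
      rw [Int.le_floor]; push_cast; linarith
    omega
  have hjle : (j:ℝ) ≤ 1/t := by
    have h1 : ((⌊1/t⌋ : ℤ):ℝ) ≤ 1/t := Int.floor_le _
    have h2 : ((j:ℤ):ℝ) = ((⌊1/t⌋ : ℤ):ℝ) := by
      rw [hj, Int.toNat_of_nonneg (by omega)]
    push_cast at h2 ⊢
    linarith
  have hjgt : 1/t < (j:ℝ) + 1 := by
    have h1 : (1/t:ℝ) < ⌊1/t⌋ + 1 := Int.lt_floor_add_one _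
    have h2 : ((⌊1/t⌋:ℤ):ℝ) ≤ (j:ℝ) := by
      rw [hj]
      exact_mod_cast Int.self_le_toNat _
    linarith
  refine ⟨j - 1, ?_, ?_⟩
  · rw [lo_append]
    have hcast : ((j - 1 : ℕ):ℝ) + 2 = (j:ℝ) + 1 := by
      have : ((j - 1 : ℕ):ℝ) = (j:ℝ) - 1 := by
        push_cast [Nat.cast_sub hj1]; ring
      linarith
    rw [hcast, hxt]
    have hP : (0:ℝ) < (j:ℝ)+1 := by positivity
    have htj : ((j:ℝ)+1)⁻¹ < t := by
      rw [← one_div]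
      rw [div_lt_iff₀ hP]
      have h1 : 1 < ((j:ℝ)+1) * t := by
        have := (div_lt_iff₀ ht0).mp hjgt
        linarith [this]
      linarith [h1]
    nlinarith
  · rw [hi_append]
    have hcast : ((j - 1 : ℕ):ℝ) + 1 = (j:ℝ) := by
      have : ((j - 1 : ℕ):ℝ) = (j:ℝ) - 1 := by
        push_cast [Nat.cast_sub hj1]; ring
      linarith
    rw [hcast, hxt]
    have hjpos : (0:ℝ) < j := by exact_mod_cast hj1
    have htle : t ≤ (j:ℝ)⁻¹ := by
      rw [← one_div, le_div_iff₀ hjpos]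
      have h1 : (j:ℝ) * t ≤ 1 := (le_div_iff₀ ht0).mp hjle
      linarith [h1]
    have htne : t ≠ (j:ℝ)⁻¹ := by
      intro hteq
      exact hirr ((j:ℚ))⁻¹ (by rw [hteq]; push_cast; ring)
    have : t < (j:ℝ)⁻¹ := lt_of_le_of_ne htle htne
    nlinarith

lemma exists_cell {x : ℝ} (hx : Irrational x) (h0 : 0 < x) (h1 : x < 1) :
    ∀ k : ℕ, ∃ l : List ℕ, l.length = k ∧ cellmem x l := by
  intro k
  induction k with
  | zero => exact ⟨[], rfl, h0, h1⟩
  | succ k ih =>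
    obtain ⟨l, hlen, hmem⟩ := ih
    obtain ⟨m, hm⟩ := step_exists hx hmem
    exact ⟨l ++ [m], by simp [hlen], hm⟩


lemma emb_lt_iff (n : ℕ) (a x : ℝ) :
    emb n a < x ↔ a < (x - ((n:ℝ)+2)⁻¹) / (((n:ℝ)+1)⁻¹ - ((n:ℝ)+2)⁻¹) := by
  rw [lt_div_iff₀ (slope_pos n)]
  unfold emb
  constructor <;> intro h <;> linarith

lemma lt_emb_iff (n : ℕ) (a x : ℝ) :
    x < emb n a ↔ (x - ((n:ℝ)+2)⁻¹) / (((n:ℝ)+1)⁻¹ - ((n:ℝ)+2)⁻¹) < a := by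
  rw [div_lt_iff₀ (slope_pos n)]
  unfold emb
  constructor <;> intro h <;> linarith

lemma disjoint_head {x : ℝ} {n n' : ℕ} {t t' : List ℕ} (hnn : n < n')
    (h : cellmem x (n :: t)) (h' : cellmem x (n' :: t')) : False := by
  have h1 : hi (n' :: t') ≤ emb n' 1 := emb_mono n' (hi_le_one t')
  have h2 : emb n 0 ≤ lo (n :: t) := emb_mono n (lo_nonneg t)
  have h3 : emb n' 1 = ((n':ℝ)+1)⁻¹ := by unfold emb; ring
  have h4 : emb n 0 = ((n:ℝ)+2)⁻¹ := by unfold emb; ring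
  have h5 : ((n':ℝ)+1)⁻¹ ≤ ((n:ℝ)+2)⁻¹ := by
    apply inv_anti₀ (by positivity)
    have : (n:ℝ) + 1 ≤ (n':ℝ) := by exact_mod_cast hnn
    linarith
  have hx1 : x < hi (n' :: t') := h'.2
  have hx2 : lo (n :: t) < x := h.1
  linarith

lemma cell_unique : ∀ (l l' : List ℕ), l.length = l'.length →
    ∀ x : ℝ, cellmem x l → cellmem x l' → l = l' := by
  intro l
  induction l with
  | nil => intro l' hlen x _ _; exact (List.length_eq_zero_iff.mp hlen.symm).symm
  | cons n t ih =>
    intro l' hlen x h h'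
    match l' with
    | [] => simp at hlen
    | n' :: t' =>
      rcases lt_trichotomy n n' with hc | hc | hc
      · exact absurd (disjoint_head hc h h') id
      · subst hc
        have ht : cellmem ((x - ((n:ℝ)+2)⁻¹) / (((n:ℝ)+1)⁻¹ - ((n:ℝ)+2)⁻¹)) t :=
          ⟨(emb_lt_iff n (lo t) x).mp h.1, (lt_emb_iff n (hi t) x).mp h.2⟩
        have ht' : cellmem ((x - ((n:ℝ)+2)⁻¹) / (((n:ℝ)+1)⁻¹ - ((n:ℝ)+2)⁻¹)) t' :=
          ⟨(emb_lt_iff n (lo t') x).mp h'.1, (lt_emb_iff n (hi t') x).mp h'.2⟩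
        have : t = t' := ih t' (by simpa using hlen) _ ht ht'
        rw [this]
      · exact absurd (disjoint_head hc h' h) id

/-- the open sets used in the covers of the irrationals -/
def V (k n : ℕ) : Set ℝ :=
  ⋃ (l : List ℕ) (m : ℕ) (_ : l.length = k) (_ : m ≤ n),
    Ioo (lo (l ++ [m])) (hi (l ++ [m]))

lemma isOpen_V (k n : ℕ) : IsOpen (V k n) := by
  unfold V
  exact isOpen_iUnion fun l => isOpen_iUnion fun m => isOpen_iUnion fun _ =>
    isOpen_iUnion fun _ => isOpen_Ioo

lemma V_mono (k : ℕ) {n n' : ℕ} (h : n ≤ n') : V k n ⊆ V k n' := by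
  intro x hx
  simp only [V, mem_iUnion] at hx ⊢
  obtain ⟨l, m, h1, h2, h3⟩ := hx
  exact ⟨l, m, h1, le_trans h2 h, h3⟩

lemma mem_V_iff {x : ℝ} {k n : ℕ} : x ∈ V k n ↔
    ∃ l m, l.length = k ∧ m ≤ n ∧ cellmem x (l ++ [m]) := by
  simp only [V, mem_iUnion, mem_Ioo, cellmem]
  tauto

lemma exists_mem_V {x : ℝ} (hx : Irrational x) (h0 : 0 < x) (h1 : x < 1) (k : ℕ) :
    ∃ m, x ∈ V k m := by
  obtain ⟨l, hlen, hmem⟩ := exists_cell hx h0 h1 (k + 1)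
  have hne : l ≠ [] := by intro h; rw [h] at hlen; simp at hlen
  refine ⟨l.getLast hne, ?_⟩
  rw [mem_V_iff]
  refine ⟨l.dropLast, l.getLast hne, ?_, le_refl _, ?_⟩
  · have := l.length_dropLast
    omega
  · rwa [List.dropLast_append_getLast hne]

section Construction

variable (q : ℕ → ℝ) (M : ℕ → ℕ)

noncomputable def pick (k : ℕ) (l : List ℕ) : ℕ :=
  open Classical in
  if q k ∈ Icc (lo (l ++ [M k + 1])) (hi (l ++ [M k + 1])) then M k + 3 else M k + 1

noncomputable def bs : ℕ → List ℕ
  | 0 => []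
  | k+1 => bs k ++ [pick q M k (bs k)]

lemma bs_length : ∀ k, (bs q M k).length = k
  | 0 => rfl
  | k+1 => by simp [bs, bs_length k]

lemma pick_ge (k : ℕ) (l : List ℕ) : M k + 1 ≤ pick q M k l := by
  unfold pick
  split <;> omega

lemma lo_bs_lt_succ (k : ℕ) : lo (bs q M k) < lo (bs q M (k+1)) := by
  show lo (bs q M k) < lo (bs q M k ++ [pick q M k (bs q M k)])
  rw [lo_append]
  have hd : 0 < hi (bs q M k) - lo (bs q M k) := sub_pos.mpr (lo_lt_hi _)
  have : (0:ℝ) < ((pick q M k (bs q M k) : ℝ) + 2)⁻¹ := by positivity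
  nlinarith

lemma hi_bs_succ_lt (k : ℕ) : hi (bs q M (k+1)) < hi (bs q M k) := by
  show hi (bs q M k ++ [pick q M k (bs q M k)]) < hi (bs q M k)
  rw [hi_append]
  have hd : 0 < hi (bs q M k) - lo (bs q M k) := sub_pos.mpr (lo_lt_hi _)
  have hp : 1 ≤ pick q M k (bs q M k) := le_trans (by omega) (pick_ge q M k _)
  have h2 : (2:ℝ) ≤ (pick q M k (bs q M k) : ℝ) + 1 := by
    have : (1:ℝ) ≤ (pick q M k (bs q M k) : ℝ) := by exact_mod_cast hp
    linarith
  have hinv : ((pick q M k (bs q M k) : ℝ) + 1)⁻¹ ≤ 2⁻¹ := by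
    apply inv_anti₀ (by norm_num) h2
  nlinarith

lemma lo_bs_mono : Monotone (fun k => lo (bs q M k)) :=
  monotone_nat_of_le_succ fun k => (lo_bs_lt_succ q M k).le

lemma hi_bs_anti : Antitone (fun k => hi (bs q M k)) :=
  antitone_nat_of_succ_le fun k => (hi_bs_succ_lt q M k).le

lemma lo_bs_le_hi_bs (k j : ℕ) : lo (bs q M k) ≤ hi (bs q M j) := by
  rcases le_total k j with h | h
  · exact le_trans (lo_bs_mono q M h) (lo_lt_hi _).le
  · exact le_trans (lo_lt_hi _).le (hi_bs_anti q M h)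

noncomputable def xx : ℝ := sSup (range fun k => lo (bs q M k))

lemma xx_mem (j : ℕ) : cellmem (xx q M) (bs q M j) := by
  have hbdd : BddAbove (range fun k => lo (bs q M k)) := by
    refine ⟨1, ?_⟩
    rintro _ ⟨k, rfl⟩
    exact le_trans (lo_lt_hi _).le (hi_le_one _)
  have hne : (range fun k => lo (bs q M k)).Nonempty := ⟨_, ⟨0, rfl⟩⟩
  have hup : xx q M ≤ hi (bs q M (j+1)) := by
    apply csSup_le hne
    rintro _ ⟨k, rfl⟩
    exact lo_bs_le_hi_bs q M k (j+1)
  have hlow : lo (bs q M (j+1)) ≤ xx q M := le_csSup hbdd ⟨j+1, rfl⟩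
  exact ⟨lt_of_lt_of_le (lo_bs_lt_succ q M j) hlow,
    lt_of_le_of_lt hup (hi_bs_succ_lt q M j)⟩

lemma xx_pos : 0 < xx q M := (xx_mem q M 0).1

lemma xx_lt_one : xx q M < 1 := (xx_mem q M 0).2

lemma xx_ne_q (k : ℕ) : xx q M ≠ q k := by
  intro heq
  have hmem := xx_mem q M (k+1)
  have hbseq : bs q M (k+1) = bs q M k ++ [pick q M k (bs q M k)] := rfl
  by_cases hc : q k ∈ Icc (lo (bs q M k ++ [M k + 1])) (hi (bs q M k ++ [M k + 1]))
  · have hpick : pick q M k (bs q M k) = M k + 3 := by unfold pick; rw [if_pos hc]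
    have h1 : xx q M < hi (bs q M k ++ [M k + 3]) := by
      rw [hbseq, hpick] at hmem; exact hmem.2
    have hd : 0 < hi (bs q M k) - lo (bs q M k) := sub_pos.mpr (lo_lt_hi _)
    have h2 : hi (bs q M k ++ [M k + 3]) < lo (bs q M k ++ [M k + 1]) := by
      rw [hi_append, lo_append]
      have e1 : ((M k + 3 : ℕ):ℝ) + 1 = (M k : ℝ) + 4 := by push_cast; ring
      have e2 : ((M k + 1 : ℕ):ℝ) + 2 = (M k : ℝ) + 3 := by push_cast; ring
      rw [e1, e2]
      have : ((M k : ℝ) + 4)⁻¹ < ((M k : ℝ) + 3)⁻¹ := by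
        apply inv_strictAnti₀ (by positivity); linarith
      nlinarith
    have h3 : lo (bs q M k ++ [M k + 1]) ≤ q k := hc.1
    rw [heq] at h1
    linarith
  · have hpick : pick q M k (bs q M k) = M k + 1 := by unfold pick; rw [if_neg hc]
    apply hc
    rw [← heq]
    rw [hbseq, hpick] at hmem
    exact ⟨hmem.1.le, hmem.2.le⟩

lemma xx_irrational (hq : ∀ r : ℚ, ∃ k, q k = (r:ℝ)) : Irrational (xx q M) := by
  rintro ⟨r, hr⟩
  obtain ⟨k, hk⟩ := hq r
  exact xx_ne_q q M k (by rw [hk, hr])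

lemma xx_not_mem_V (k : ℕ) : xx q M ∉ V k (M k) := by
  intro hmem
  rw [mem_V_iff] at hmem
  obtain ⟨l, m, hlen, hmle, hcell⟩ := hmem
  have hcell' : cellmem (xx q M) (bs q M k ++ [pick q M k (bs q M k)]) := xx_mem q M (k+1)
  have heq : l ++ [m] = bs q M k ++ [pick q M k (bs q M k)] := by
    refine cell_unique _ _ ?_ _ hcell hcell'
    simp [hlen, bs_length q M k]
  have hll : l.length = (bs q M k).length := by rw [hlen, bs_length]
  obtain ⟨-, h2⟩ := List.append_inj heq hll
  have : m = pick q M k (bs q M k) := by simpa using h2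
  have := pick_ge q M k (bs q M k)
  omega

end Construction

/-- Master lemma: for every `M : ℕ → ℕ` there is an irrational in `(0,1)`
avoiding all `V k (M k)`. -/
theorem exists_bad_irrational (M : ℕ → ℕ) :
    ∃ x : ℝ, Irrational x ∧ 0 < x ∧ x < 1 ∧ ∀ k, x ∉ V k (M k) := by
  classical
  set q : ℕ → ℝ := fun n => ((Denumerable.eqv ℚ).symm n : ℚ) with hq
  have hsurj : ∀ r : ℚ, ∃ k, q k = (r:ℝ) := fun r =>
    ⟨Denumerable.eqv ℚ r, by simp [hq]⟩
  exact ⟨xx q M, xx_irrational q M hsurj, xx_pos q M, xx_lt_one q M, xx_not_mem_V q M⟩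

end ThetaCells


namespace ThetaGlue

abbrev XX : Type := ℝ ⊕ ↥{x : ℝ | Irrational x}

def A : Set XX := range Sum.inl
def C : Set XX := Sum.inr '' (Subtype.val ⁻¹' (Iio (0:ℝ) ∪ Ioi 1))
def Bn (k n : ℕ) : Set XX := Sum.inr '' (Subtype.val ⁻¹' ThetaCells.V k n)
def UU (k : ℕ) : Set (Set XX) := insert A (insert C (range (Bn k)))

lemma isOpen_A : IsOpen A := isOpen_range_inl
lemma isOpen_C : IsOpen C :=
  isOpenMap_inr _ ((isOpen_Iio.union isOpen_Ioi).preimage continuous_subtype_val)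
lemma isOpen_Bn (k n : ℕ) : IsOpen (Bn k n) :=
  isOpenMap_inr _ ((ThetaCells.isOpen_V k n).preimage continuous_subtype_val)

lemma Bn_mono (k : ℕ) {n n' : ℕ} (h : n ≤ n') : Bn k n ⊆ Bn k n' :=
  image_mono (preimage_mono (ThetaCells.V_mono k h))

lemma UU_opens (k : ℕ) : ∀ S ∈ UU k, IsOpen S := by
  intro S hS
  rcases hS with rfl | rfl | ⟨n, rfl⟩
  · exact isOpen_A
  · exact isOpen_C
  · exact isOpen_Bn k n

lemma UU_covers (k : ℕ) : ⋃₀ UU k = Set.univ := by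
  apply eq_univ_of_forall
  intro x
  cases x with
  | inl r => exact ⟨A, Or.inl rfl, mem_range_self r⟩
  | inr y =>
    have hy : Irrational (y : ℝ) := y.2
    by_cases h0 : (y:ℝ) < 0
    · exact ⟨C, Or.inr (Or.inl rfl), ⟨y, Or.inl h0, rfl⟩⟩
    by_cases h1 : 1 < (y:ℝ)
    · exact ⟨C, Or.inr (Or.inl rfl), ⟨y, Or.inr h1, rfl⟩⟩
    push_neg at h0 h1
    have h0' : 0 < (y:ℝ) := lt_of_le_of_ne h0 (by
      intro h; exact hy ⟨0, by rw [← h]; norm_num⟩)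
    have h1' : (y:ℝ) < 1 := lt_of_le_of_ne h1 (by
      intro h; exact hy ⟨1, by rw [h]; norm_num⟩)
    obtain ⟨m, hm⟩ := ThetaCells.exists_mem_V hy h0' h1' k
    exact ⟨Bn k m, Or.inr (Or.inr ⟨m, rfl⟩), ⟨y, hm, rfl⟩⟩

lemma exists_bound (k : ℕ) (F : Set (Set XX)) (hF : F ⊆ UU k) (hfin : F.Finite) :
    ∃ Mk : ℕ, ∀ S ∈ F, S ⊆ A ∪ C ∪ Bn k Mk := by
  classical
  have hc : ∀ S ∈ F, ∃ n, S ⊆ A ∪ C ∪ Bn k n := by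
    intro S hS
    rcases hF hS with rfl | rfl | ⟨n, rfl⟩
    · exact ⟨0, fun x hx => Or.inl (Or.inl hx)⟩
    · exact ⟨0, fun x hx => Or.inl (Or.inr hx)⟩
    · exact ⟨n, fun x hx => Or.inr hx⟩
  choose f hf using hc
  refine ⟨hfin.toFinset.sup (fun S => if h : S ∈ F then f S h else 0), ?_⟩
  intro S hS
  refine (hf S hS).trans (union_subset_union_right _ (Bn_mono k ?_))
  have hle := Finset.le_sup (f := fun S => if h : S ∈ F then f S h else 0)
    (hfin.mem_toFinset.mpr hS)
  simpa [dif_pos hS] using hle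

lemma not_menger : ¬ Menger XX := by
  intro hM
  obtain ⟨F, hF, hcover⟩ := hM UU (fun k => ⟨UU_opens k, UU_covers k⟩)
  choose Mk hMk using fun k => exists_bound k (F k) (hF k).1 (hF k).2
  obtain ⟨x, hxirr, hx0, hx1, hxV⟩ := ThetaCells.exists_bad_irrational Mk
  have hp : (Sum.inr ⟨x, hxirr⟩ : XX) ∈ ⋃₀ ⋃ k, F k := by rw [hcover]; trivial
  obtain ⟨S, hS, hpS⟩ := hp
  rw [mem_iUnion] at hS
  obtain ⟨k, hSk⟩ := hS
  rcases hMk k S hSk hpS with (h | h) | h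
  · obtain ⟨r, hr⟩ := h
    exact Sum.inl_ne_inr hr
  · obtain ⟨y, hy, hyp⟩ := h
    have hyx : y = ⟨x, hxirr⟩ := Sum.inr.inj hyp
    rw [hyx] at hy
    rcases hy with h | h
    · exact absurd hx0 (not_lt.mpr (le_of_lt h))
    · exact absurd hx1 (not_lt.mpr (le_of_lt h))
  · obtain ⟨y, hy, hyp⟩ := h
    have hyx : y = ⟨x, hxirr⟩ := Sum.inr.inj hyp
    rw [hyx] at hy
    exact hxV k hy

lemma prop_theta : PropTheta XX := by
  refine ⟨fun n => {Sum.inl ((n:ℝ))}ᶜ, ?_, ?_, ?_, {Sum.inl 0}, countable_singleton _, ?_⟩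
  · intro a b h
    have h2 : ({Sum.inl ((a:ℝ))} : Set XX) = {Sum.inl ((b:ℝ))} := compl_inj_iff.mp h
    have h3 := singleton_eq_singleton_iff.mp h2
    exact Nat.cast_injective (Sum.inl.inj h3)
  · intro n; exact isClosed_singleton.isOpen_compl
  · intro x
    cases x with
    | inr y => exact Eventually.of_forall (fun n => by simp)
    | inl r =>
      rw [eventually_atTop]
      refine ⟨⌊r⌋.toNat + 1, fun n hn => ?_⟩
      simp only [mem_compl_iff, mem_singleton_iff]
      intro h
      have hr : r = (n:ℝ) := Sum.inl.inj h
      have : (⌊r⌋ : ℤ) = n := by rw [hr]; exact Int.floor_natCast n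
      omega
  · intro V hVcl hVsub Y hDY hγ
    have h0 : (Sum.inl (0:ℝ) : XX) ∈ Y := hDY rfl
    obtain ⟨n, hn⟩ := (hγ _ h0).exists
    have hW : IsClopen (Sum.inl ⁻¹' V n : Set ℝ) := (hVcl n).preimage continuous_inl
    rcases isClopen_iff.mp hW with he | hu
    · exact absurd (eq_empty_iff_forall_notMem.mp he 0 hn) (fun h => h)
    · have hmem : ((n:ℝ)) ∈ (Sum.inl ⁻¹' V n : Set ℝ) := hu ▸ mem_univ _
      exact absurd rfl (hVsub n hmem)

end ThetaGlue

/-- The topological sum `ℝ ⊕ (ℝ∖ℚ)` satisfies (θ) but not S_fin(O,O). -/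
theorem real_sum_irrational_theta_not_menger :
    PropTheta (ℝ ⊕ ↥{x : ℝ | Irrational x}) ∧ ¬ Menger (ℝ ⊕ ↥{x : ℝ | Irrational x}) :=
  ⟨ThetaGlue.prop_theta, ThetaGlue.not_menger⟩
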